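/- Let X be a real N×P matrix with full column rank and C a real N×L matrix such that Cᵀ(I_N − P_X)C is invertible. Let (Ω, F, ℙ) be a probability space and ε : Ω → ℝ^N a square-integrable random vector with E[ε_i] = 0 for all i and E[ε_i ε_j] = σ_y² if i = j and 0 otherwise. Then the random vector β̂_C − β_C := (Cᵀ(I_N − P_X)C)⁻¹Cᵀ(I_N − P_X)ε satisfies E[‖β̂_C − β_C‖₂²] = σ_y² · tr((Cᵀ(I_N − P_X)C)⁻¹). -/

import Mathlib

open Matrix MeasureTheory ProbabilityTheory

/-- The orthogonal projection matrix onto the column space of `M`: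
`P_M = M (Mᵀ M)⁻¹ Mᵀ`. -/
noncomputable def proj {N K : ℕ} (M : Matrix (Fin N) (Fin K) ℝ) :
    Matrix (Fin N) (Fin N) ℝ :=
  M * (Mᵀ * M)⁻¹ * Mᵀ

lemma isUnit_transpose_mul_self {N P : ℕ} (X : Matrix (Fin N) (Fin P) ℝ)
    (hX : X.rank = P) : IsUnit (Xᵀ * X) := by
  rw [Matrix.isUnit_iff_isUnit_det, isUnit_iff_ne_zero]
  intro hdet
  obtain ⟨v, hv0, hv⟩ := (Matrix.exists_mulVec_eq_zero_iff).mpr hdet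
  have hker : LinearMap.ker X.mulVecLin = ⊥ := by
    have h1 := X.mulVecLin.finrank_range_add_finrank_ker
    rw [show Module.finrank ℝ (LinearMap.range X.mulVecLin) = P from hX,
      Module.finrank_fin_fun] at h1
    have : Module.finrank ℝ (LinearMap.ker X.mulVecLin) = 0 := by omega
    exact Submodule.finrank_eq_zero.mp this
  have hmem : v ∈ LinearMap.ker (Xᵀ * X).mulVecLin := by
    simp only [LinearMap.mem_ker, Matrix.mulVecLin_apply]
    exact hv
  rw [Matrix.ker_mulVecLin_transpose_mul_self, hker] at hmem
  exact hv0 hmem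

lemma integrable_mul_of_L2 {Ω : Type*} [MeasureSpace Ω] (f g : Ω → ℝ)
    (hf : MemLp f 2 (ℙ : Measure Ω)) (hg : MemLp g 2 (ℙ : Measure Ω)) :
    Integrable (fun ω => f ω * g ω) (ℙ : Measure Ω) := by
  have h : MemLp (g • f) 1 (ℙ : Measure Ω) := by
    refine hf.smul hg (hpqr := ⟨?_⟩)
    norm_num [ENNReal.inv_two_add_inv_two]
  rw [memLp_one_iff_integrable] at h
  simpa [smul_eq_mul, mul_comm, Pi.mul_def] using h

/-- If `ε` is a square-integrable random vector with mean zero and covariance `σ_y² I`,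
then `β̂_C - β_C = (Cᵀ(I - P_X)C)⁻¹Cᵀ(I - P_X)ε` satisfies
`E[‖β̂_C - β_C‖₂²] = σ_y² tr((Cᵀ(I - P_X)C)⁻¹)`. -/
theorem expected_sq_norm_ols_error
    {Ω : Type*} [MeasureSpace Ω] (hprob : IsProbabilityMeasure (ℙ : Measure Ω))
    (N P L : ℕ) (X : Matrix (Fin N) (Fin P) ℝ) (C : Matrix (Fin N) (Fin L) ℝ)
    (hX : X.rank = P)
    (hC : IsUnit (Cᵀ * ((1 : Matrix (Fin N) (Fin N) ℝ) - proj X) * C))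
    (ε : Ω → Fin N → ℝ) (σy : ℝ)
    (hmeas : ∀ i, Measurable fun ω => ε ω i)
    (hL2 : ∀ i, MemLp (fun ω => ε ω i) 2)
    (hmean : ∀ i, ∫ ω, ε ω i = 0)
    (hcov : ∀ i j, ∫ ω, ε ω i * ε ω j = if i = j then σy ^ 2 else 0) :
    ∫ ω, ∑ j, (((Cᵀ * ((1 : Matrix (Fin N) (Fin N) ℝ) - proj X) * C)⁻¹ * Cᵀ *
        ((1 : Matrix (Fin N) (Fin N) ℝ) - proj X)).mulVec (ε ω) j) ^ 2
      = σy ^ 2 * ((Cᵀ * ((1 : Matrix (Fin N) (Fin N) ℝ) - proj X) * C)⁻¹).trace := by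
  set M : Matrix (Fin N) (Fin N) ℝ := (1 : Matrix (Fin N) (Fin N) ℝ) - proj X with hM
  set B : Matrix (Fin L) (Fin L) ℝ := Cᵀ * M * C with hB
  set A : Matrix (Fin L) (Fin N) ℝ := B⁻¹ * Cᵀ * M with hA
  -- basic matrix facts
  have hXu : IsUnit (Xᵀ * X) := isUnit_transpose_mul_self X hX
  have hXdet : IsUnit (Xᵀ * X).det := (Matrix.isUnit_iff_isUnit_det _).mp hXu
  have hPsym : (proj X)ᵀ = proj X := by
    simp [proj, Matrix.transpose_mul, Matrix.transpose_nonsing_inv, Matrix.mul_assoc]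
  have hPidem : proj X * proj X = proj X := by
    simp only [proj]
    calc X * (Xᵀ * X)⁻¹ * Xᵀ * (X * (Xᵀ * X)⁻¹ * Xᵀ)
        = X * ((Xᵀ * X)⁻¹ * (Xᵀ * X)) * ((Xᵀ * X)⁻¹ * Xᵀ) := by
          simp only [Matrix.mul_assoc]
      _ = X * (Xᵀ * X)⁻¹ * Xᵀ := by
          rw [Matrix.nonsing_inv_mul _ hXdet]
          simp [Matrix.mul_assoc]
  have hMsym : Mᵀ = M := by
    simp [hM, Matrix.transpose_sub, hPsym]
  have hMidem : M * M = M := by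
    simp only [hM, Matrix.sub_mul, Matrix.mul_sub, Matrix.one_mul, Matrix.mul_one, hPidem]
    abel
  have hBsym : Bᵀ = B := by
    simp [hB, Matrix.transpose_mul, hMsym, Matrix.mul_assoc]
  have hBdet : IsUnit B.det := (Matrix.isUnit_iff_isUnit_det _).mp hC
  have hAAT : A * Aᵀ = B⁻¹ := by
    have hATr : Aᵀ = M * C * B⁻¹ := by
      simp [hA, Matrix.transpose_mul, hMsym, Matrix.transpose_nonsing_inv, hBsym,
        Matrix.mul_assoc]
    calc A * Aᵀ = B⁻¹ * (Cᵀ * (M * M) * C) * B⁻¹ := by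
          rw [hATr, hA]; simp only [Matrix.mul_assoc]
      _ = B⁻¹ * B * B⁻¹ := by rw [hMidem, hB]
      _ = B⁻¹ := by rw [Matrix.nonsing_inv_mul _ hBdet, Matrix.one_mul]
  -- integrability
  have hint : ∀ i k : Fin N, Integrable (fun ω => ε ω i * ε ω k) (ℙ : Measure Ω) :=
    fun i k => integrable_mul_of_L2 _ _ (hL2 i) (hL2 k)
  -- pointwise expansion
  have hexp : ∀ ω, ∑ j, (A.mulVec (ε ω) j) ^ 2
      = ∑ j, ∑ i, ∑ k, (A j i * A j k) * (ε ω i * ε ω k) := by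
    intro ω
    refine Finset.sum_congr rfl fun j _ => ?_
    rw [Matrix.mulVec, dotProduct, pow_two, Finset.sum_mul_sum]
    exact Finset.sum_congr rfl fun i _ => Finset.sum_congr rfl fun k _ => by ring
  calc ∫ ω, ∑ j, (A.mulVec (ε ω) j) ^ 2
      = ∫ ω, ∑ j, ∑ i, ∑ k, (A j i * A j k) * (ε ω i * ε ω k) := by
        exact integral_congr_ae (Filter.Eventually.of_forall fun ω => hexp ω)
    _ = ∑ j, ∑ i, ∑ k, ∫ ω, (A j i * A j k) * (ε ω i * ε ω k) := by
        rw [integral_finset_sum _ fun j _ => ?_]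
        · exact Finset.sum_congr rfl fun j _ => by
            rw [integral_finset_sum _ fun i _ => ?_]
            · exact Finset.sum_congr rfl fun i _ => by
                rw [integral_finset_sum _ fun k _ => ?_]
                exact (hint i k).const_mul _
            · exact integrable_finset_sum _ fun k _ => (hint i k).const_mul _
        · exact integrable_finset_sum _ fun i _ =>
            integrable_finset_sum _ fun k _ => (hint i k).const_mul _
    _ = ∑ j, ∑ i, ∑ k, (A j i * A j k) * (if i = k then σy ^ 2 else 0) := by
        refine Finset.sum_congr rfl fun j _ => Finset.sum_congr rfl fun i _ =>
          Finset.sum_congr rfl fun k _ => ?_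
        rw [integral_const_mul, hcov i k]
    _ = ∑ j, ∑ i, A j i * A j i * σy ^ 2 := by
        refine Finset.sum_congr rfl fun j _ => Finset.sum_congr rfl fun i _ => ?_
        simp [Finset.mul_sum, mul_ite]
    _ = σy ^ 2 * (A * Aᵀ).trace := by
        have htr : (A * Aᵀ).trace = ∑ j, ∑ i, A j i * A j i := by
          simp [Matrix.trace, Matrix.diag, Matrix.mul_apply]
        rw [htr, Finset.mul_sum]
        refine Finset.sum_congr rfl fun j _ => ?_
        rw [Finset.mul_sum]
        exact Finset.sum_congr rfl fun i _ => by ring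
    _ = σy ^ 2 * B⁻¹.trace := by rw [hAAT]
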